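/- Let f_t : ℕ → [0,∞) satisfy ∑_{ε≥0} ε f_t(ε) ≤ e and f_t(ε) ≤ 2/(1+t) for ε ≥ 1. Then ∑_{ε≥1} f_t(ε) log ε ≤ c (1 + log(1+t))/√(1+t) for a constant c = c(e) independent of t. -/

import Mathlib

/-- Logarithmic moment bound: if `f t` is nonnegative with energy
`∑ ε ε·f t ε ≤ e` and `f t ε ≤ 2/(1+t)` for `ε ≥ 1`, then
`∑_{ε≥1} f t ε · log ε ≤ c(1 + log(1+t)) / √(1+t)` with `c = c(e)`. -/
theorem log_moment_bound (e : ℝ) (he : 0 ≤ e) :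
    ∃ c : ℝ, 0 < c ∧ ∀ f : ℝ → ℕ → ℝ,
      (∀ t : ℝ, 0 ≤ t → ∀ ε : ℕ, 0 ≤ f t ε) →
      (∀ t : ℝ, 0 ≤ t → Summable (fun ε : ℕ => (ε : ℝ) * f t ε)) →
      (∀ t : ℝ, 0 ≤ t → ∑' ε : ℕ, (ε : ℝ) * f t ε ≤ e) →
      (∀ t : ℝ, 0 ≤ t → ∀ ε : ℕ, 1 ≤ ε → f t ε ≤ 2 / (1 + t)) →
      ∀ t : ℝ, 0 ≤ t →
        ∑' n : ℕ, f t (n + 1) * Real.log (n + 1) ≤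
          c * (1 + Real.log (1 + t)) / Real.sqrt (1 + t) := by
  refine ⟨41 + 4 * e, by positivity, ?_⟩
  intro f hpos hsum hmom hbd t ht
  have h1t : (0:ℝ) < 1 + t := by linarith
  set s : ℝ := Real.sqrt (1 + t) with hs_def
  have hs1 : (1:ℝ) ≤ s := by
    have h1 := Real.sq_sqrt (show (0:ℝ) ≤ 1 + t by linarith)
    have h2 := Real.sqrt_nonneg (1 + t)
    rw [hs_def]; nlinarith
  have hs0 : (0:ℝ) < s := by linarith
  have hss : s * s = 1 + t := Real.mul_self_sqrt (by linarith)
  set L : ℝ := Real.log (1 + t) with hL_def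
  have hL0 : 0 ≤ L := Real.log_nonneg (by linarith)
  set N : ℕ := ⌈s⌉₊ + 3 with hN_def
  have hN3 : (3:ℝ) ≤ (N : ℝ) := by
    have : (3:ℕ) ≤ N := by omega
    exact_mod_cast this
  have hNpos : (0:ℝ) < (N : ℝ) := by linarith
  have hsN : s ≤ (N : ℝ) := by
    have := Nat.le_ceil s
    have h2 : ((⌈s⌉₊ : ℝ)) ≤ (N : ℝ) := by
      rw [hN_def]; push_cast; linarith
    linarith
  have hN5s : (N : ℝ) ≤ 5 * s := by
    have h1 : (⌈s⌉₊ : ℝ) < s + 1 := Nat.ceil_lt_add_one hs0.le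
    have : (N : ℝ) = (⌈s⌉₊ : ℝ) + 3 := by rw [hN_def]; push_cast; ring
    linarith
  have hexpN : Real.exp 1 ≤ (N : ℝ) := by
    have := Real.exp_one_lt_d9
    linarith
  have hlogN0 : 0 ≤ Real.log N := Real.log_nonneg (by linarith)
  -- log N ≤ 4 * (1 + L)
  have hlogN : Real.log N ≤ 4 * (1 + L) := by
    have h5 : Real.log N ≤ Real.log (5 * s) :=
      Real.log_le_log (by linarith) hN5s
    have h6 : Real.log (5 * s) = Real.log 5 + Real.log s := by
      rw [Real.log_mul (by norm_num) (by linarith)]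
    have h7 : Real.log s = L / 2 := by
      rw [hs_def, Real.log_sqrt (by linarith)]
    have h8 : Real.log 5 ≤ 4 := by
      have := Real.log_le_sub_one_of_pos (by norm_num : (0:ℝ) < 5)
      linarith
    rw [h6, h7] at h5
    linarith
  -- the summands
  set g : ℕ → ℝ := fun n => f t (n + 1) * Real.log (n + 1) with hg_def
  set A : ℕ → ℝ := fun n => if n + 1 ≤ N then 2 / (1 + t) * Real.log N else 0
    with hA_def
  set B : ℕ → ℝ := fun n =>
    ((n + 1 : ℕ) : ℝ) * f t (n + 1) * (Real.log N / (N : ℝ)) with hB_def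
  have hfpos := hpos t ht
  have hgnn : ∀ n, 0 ≤ g n := by
    intro n
    apply mul_nonneg (hfpos _)
    apply Real.log_nonneg
    have := Nat.cast_nonneg (α := ℝ) n
    linarith
  -- summability
  have hsum' : Summable (fun n : ℕ => ((n + 1 : ℕ) : ℝ) * f t (n + 1)) :=
    (summable_nat_add_iff 1).mpr (hsum t ht)
  have hBsummable : Summable B := hsum'.mul_right _
  have hAsummable : Summable A := by
    apply summable_of_ne_finset_zero (s := Finset.range N)
    intro n hn
    have : ¬ (n + 1 ≤ N) := by
      simp only [Finset.mem_range] at hn; omega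
    simp only [hA_def, this, if_false]
  have hBnn : ∀ n, 0 ≤ B n := fun n =>
    mul_nonneg (mul_nonneg (by positivity) (hfpos _)) (by positivity)
  have hAnn : ∀ n, 0 ≤ A n := by
    intro n
    by_cases h : n + 1 ≤ N <;> simp only [hA_def, h, if_true, if_false] <;> positivity
  -- pointwise bound
  have hpt : ∀ n : ℕ, g n ≤ A n + B n := by
    intro n
    have hε1 : (1:ℝ) ≤ ((n + 1 : ℕ) : ℝ) := by push_cast; linarith
    have hlogε0 : 0 ≤ Real.log ((n + 1 : ℕ) : ℝ) := Real.log_nonneg hε1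
    by_cases h : n + 1 ≤ N
    · have hle : Real.log ((n + 1 : ℕ) : ℝ) ≤ Real.log N :=
        Real.log_le_log (by linarith) (by exact_mod_cast h)
      have h1 : g n ≤ 2 / (1 + t) * Real.log N := by
        rw [hg_def]
        have := hbd t ht (n + 1) (by omega)
        calc f t (n + 1) * Real.log ((n:ℝ) + 1)
            = f t (n + 1) * Real.log ((n + 1 : ℕ) : ℝ) := by push_cast; ring_nf
          _ ≤ 2 / (1 + t) * Real.log N :=
            mul_le_mul this hle hlogε0 (by positivity)
      have h2 : A n = 2 / (1 + t) * Real.log N := by simp only [hA_def, h, if_true]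
      have := hBnn n
      linarith
    · -- tail: log ε ≤ ε log N / N
      push_neg at h
      have hNε : (N : ℝ) ≤ ((n + 1 : ℕ) : ℝ) := by exact_mod_cast h.le
      have hεpos : (0:ℝ) < ((n + 1 : ℕ) : ℝ) := by linarith
      have hanti := Real.log_div_self_antitoneOn
        (show (N : ℝ) ∈ {x : ℝ | Real.exp 1 ≤ x} from by
          simp only [Set.mem_setOf_eq]; linarith)
        (show ((n + 1 : ℕ) : ℝ) ∈ {x : ℝ | Real.exp 1 ≤ x} from by
          simp only [Set.mem_setOf_eq]; linarith) hNε
      have hlogε : Real.log ((n + 1 : ℕ) : ℝ) ≤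
          ((n + 1 : ℕ) : ℝ) * (Real.log N / (N : ℝ)) := by
        have h2 := (div_le_div_iff₀ hεpos hNpos).mp hanti
        rw [mul_comm ((n + 1 : ℕ) : ℝ) _, div_mul_eq_mul_div,
          le_div_iff₀ hNpos]
        linarith
      have h1 : g n ≤ B n := by
        rw [hg_def, hB_def]
        calc f t (n + 1) * Real.log ((n:ℝ) + 1)
            = f t (n + 1) * Real.log ((n + 1 : ℕ) : ℝ) := by push_cast; ring_nf
          _ ≤ f t (n + 1) * (((n + 1 : ℕ) : ℝ) * (Real.log N / (N : ℝ))) :=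
            mul_le_mul_of_nonneg_left hlogε (hfpos _)
          _ = ((n + 1 : ℕ) : ℝ) * f t (n + 1) * (Real.log N / (N : ℝ)) := by ring
      have := hAnn n
      linarith
  have hgsummable : Summable g :=
    Summable.of_nonneg_of_le hgnn hpt (hAsummable.add hBsummable)
  -- sum the bound
  have hmain : ∑' n, g n ≤ (∑' n, A n) + (∑' n, B n) := by
    calc ∑' n, g n ≤ ∑' n, (A n + B n) :=
      Summable.tsum_le_tsum hpt hgsummable (hAsummable.add hBsummable)
    _ = (∑' n, A n) + (∑' n, B n) := Summable.tsum_add hAsummable hBsummable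
  -- bound tsum A
  have hAbound : ∑' n, A n ≤ (N : ℝ) * (2 / (1 + t) * Real.log N) := by
    rw [tsum_eq_sum (s := Finset.range N)
      (by intro n hn; simp only [Finset.mem_range] at hn
          have : ¬ (n + 1 ≤ N) := by omega
          simp only [hA_def, this, if_false])]
    calc ∑ n ∈ Finset.range N, A n
        ≤ ∑ n ∈ Finset.range N, (2 / (1 + t) * Real.log N) := by
          apply Finset.sum_le_sum
          intro n _
          by_cases h : n + 1 ≤ N
          · simp only [hA_def, h, if_true, le_refl]
          · simp only [hA_def, h, if_false]
            positivity
      _ = (N : ℝ) * (2 / (1 + t) * Real.log N) := by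
          rw [Finset.sum_const, Finset.card_range]; simp [nsmul_eq_mul]
  -- bound tsum B
  have hBbound : ∑' n, B n ≤ e * (Real.log N / (N : ℝ)) := by
    rw [hB_def]
    rw [tsum_mul_right]
    apply mul_le_mul_of_nonneg_right _ (by positivity)
    have hzero : ∑' ε : ℕ, (ε : ℝ) * f t ε =
        ∑' n : ℕ, ((n + 1 : ℕ) : ℝ) * f t (n + 1) := by
      rw [Summable.tsum_eq_zero_add (hsum t ht)]
      simp
    calc ∑' n : ℕ, ((n + 1 : ℕ) : ℝ) * f t (n + 1)
        = ∑' ε : ℕ, (ε : ℝ) * f t ε := hzero.symm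
      _ ≤ e := hmom t ht
  -- final arithmetic
  have hfin1 : (N : ℝ) * (2 / (1 + t) * Real.log N) ≤ 40 * (1 + L) / s := by
    have h1 : (N : ℝ) * (2 / (1 + t) * Real.log N) ≤
        (5 * s) * (2 / (1 + t) * (4 * (1 + L))) := by
      apply mul_le_mul hN5s (mul_le_mul_of_nonneg_left hlogN (by positivity))
        (by positivity) (by positivity)
    have h2 : (5 * s) * (2 / (1 + t) * (4 * (1 + L))) = 40 * (1 + L) / s := by
      rw [← hss]; field_simp; ring
    linarith
  have hfin2 : e * (Real.log N / (N : ℝ)) ≤ e * (4 * (1 + L) / s) := by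
    apply mul_le_mul_of_nonneg_left _ he
    apply div_le_div₀ (by positivity) hlogN hs0 hsN
  have hgoal : (∑' n, g n) ≤ (41 + 4 * e) * (1 + L) / s := by
    have hq : (0:ℝ) ≤ (1 + L) / s := by positivity
    have heq : 40 * (1 + L) / s + e * (4 * (1 + L) / s) = (40 + 4 * e) * ((1 + L) / s) := by
      field_simp
    have hle2 : (40 + 4 * e) * ((1 + L) / s) ≤ (41 + 4 * e) * ((1 + L) / s) :=
      mul_le_mul_of_nonneg_right (by linarith) hq
    have heq2 : (41 + 4 * e) * ((1 + L) / s) = (41 + 4 * e) * (1 + L) / s := by ring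
    have : 40 * (1 + L) / s + e * (4 * (1 + L) / s) ≤ (41 + 4 * e) * (1 + L) / s := by
      rw [heq, ← heq2]; exact hle2
    linarith
  exact hgoal
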